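/- Every continuous function g : ℝ² → ℂ satisfying |g(x,y) − φ(x,y)| < 1/20 for all (x,y) ∈ [−π,π]² has a zero in [−π,π]², i.e., there exists (x₀,y₀) ∈ [−π,π]² with g(x₀,y₀) = 0. -/

import Mathlib

open Real Set


/-- 1-D logarithm lifting lemma for a nonvanishing continuous function on `[0,1]`. -/
lemma lift_exists (F : ℝ → ℂ) (hF : Continuous F)
    (hne : ∀ t ∈ Set.Icc (0:ℝ) 1, F t ≠ 0) (z₀ : ℂ) (hz : Complex.exp z₀ = F 0) :
    ∃ h : ℝ → ℂ, Continuous h ∧ h 0 = z₀ ∧ ∀ t ∈ Set.Icc (0:ℝ) 1, Complex.exp (h t) = F t := by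
  obtain ⟨q, hq, hqmin⟩ := isCompact_Icc.exists_isMinOn (Set.nonempty_Icc.2 zero_le_one)
      (hF.norm.continuousOn)
  set m := ‖F q‖ with hm
  have hm0 : 0 < m := norm_pos_iff.2 (hne q hq)
  have hUC := isCompact_Icc.uniformContinuousOn_of_continuous
    (hF.continuousOn : ContinuousOn F (Set.Icc (0:ℝ) 1))
  obtain ⟨δ, hδ0, hδ⟩ := Metric.uniformContinuousOn_iff.1 hUC m hm0
  obtain ⟨n', hn'⟩ := exists_nat_one_div_lt hδ0
  set n : ℕ := n' + 1 with hn
  have hnpos : (0:ℝ) < n := by positivity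
  have hstep : ∀ a ∈ Set.Icc (0:ℝ) 1, ∀ b ∈ Set.Icc (0:ℝ) 1, |a - b| ≤ 1 / n →
      ‖F a - F b‖ < m := by
    intro a ha b hb hab
    have h1n : (1:ℝ)/(n:ℝ) < δ := by rw [hn]; push_cast; exact hn'
    have : dist a b < δ := lt_of_le_of_lt (by rw [Real.dist_eq]; exact hab) h1n
    simpa [dist_eq_norm] using hδ a ha b hb this
  -- partition points
  have hmem : ∀ j : ℕ, j ≤ n → ((j:ℝ)/n) ∈ Set.Icc (0:ℝ) 1 := by
    intro j hj
    constructor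
    · positivity
    · rw [div_le_one hnpos]; exact_mod_cast hj
  set Q : ℕ → ℝ → ℝ := fun j t => max ((j:ℝ)/n) (min t (((j:ℝ)+1)/n)) with hQ
  have hQmem : ∀ j : ℕ, j < n → ∀ t : ℝ, Q j t ∈ Set.Icc (0:ℝ) 1 := by
    intro j hj t
    simp only [hQ]
    have h1 : (0:ℝ) ≤ (j:ℝ)/n := by positivity
    have h2 : ((j:ℝ)+1)/n ≤ 1 := by
      rw [div_le_one hnpos]; exact_mod_cast hj
    refine ⟨le_trans h1 (le_max_left _ _), ?_⟩
    apply max_le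
    · exact le_trans (by gcongr; linarith) h2
    · exact le_trans (min_le_right _ _) h2
  have hQdist : ∀ j : ℕ, j < n → ∀ t : ℝ, |Q j t - (j:ℝ)/n| ≤ 1/n := by
    intro j hj t
    simp only [hQ]
    have hinv : (0:ℝ) < 1/n := by positivity
    rw [abs_le]
    constructor
    · have := le_max_left ((j:ℝ)/n) (min t (((j:ℝ)+1)/n)); linarith
    · have h3 : Q j t ≤ ((j:ℝ)+1)/n := by
        apply max_le
        · gcongr; linarith
        · exact min_le_right _ _
      have : ((j:ℝ)+1)/n - (j:ℝ)/n = 1/n := by field_simp; ring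
      linarith
  have hFne : ∀ j : ℕ, j ≤ n → F ((j:ℝ)/n) ≠ 0 := fun j hj => hne _ (hmem j hj)
  -- the ratio is close to 1
  have hratio : ∀ j : ℕ, j < n → ∀ t : ℝ, ‖F (Q j t) / F ((j:ℝ)/n) - 1‖ < 1 := by
    intro j hj t
    have hFj := hFne j (le_of_lt hj)
    have hFjm : m ≤ ‖F ((j:ℝ)/n)‖ := hqmin (hmem j (le_of_lt hj))
    have := hstep (Q j t) (hQmem j hj t) ((j:ℝ)/n) (hmem j (le_of_lt hj)) (hQdist j hj t)
    rw [div_sub_one hFj, norm_div]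
    rw [div_lt_one (lt_of_lt_of_le hm0 hFjm)]
    exact lt_of_lt_of_le this hFjm
  have hre : ∀ j : ℕ, j < n → ∀ t : ℝ, 0 < (F (Q j t) / F ((j:ℝ)/n)).re := by
    intro j hj t
    have := hratio j hj t
    have h2 : |(F (Q j t) / F ((j:ℝ)/n) - 1).re| ≤ ‖F (Q j t) / F ((j:ℝ)/n) - 1‖ :=
      Complex.abs_re_le_norm _
    have h3 : (F (Q j t) / F ((j:ℝ)/n) - 1).re
        = (F (Q j t) / F ((j:ℝ)/n)).re - 1 := by simp
    rw [h3] at h2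
    rcases abs_le.1 h2 with ⟨h4, _⟩
    linarith
  set h : ℝ → ℂ := fun t => z₀ + ∑ j ∈ Finset.range n,
      Complex.log (F (Q j t) / F ((j:ℝ)/n)) with hh
  refine ⟨h, ?_, ?_, ?_⟩
  · apply continuous_const.add
    apply continuous_finset_sum
    intro j hj
    rw [Finset.mem_range] at hj
    have hQc : Continuous (Q j) :=
      continuous_const.max (continuous_id.min continuous_const)
    have : Continuous (fun t => F (Q j t) / F ((j:ℝ)/n)) := (hF.comp hQc).div_const _
    exact this.clog (fun t => Or.inl (hre j hj t))
  · rw [hh]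
    simp only
    have : ∀ j ∈ Finset.range n, Complex.log (F (Q j 0) / F ((j:ℝ)/n)) = 0 := by
      intro j hj
      rw [Finset.mem_range] at hj
      have h1 : Q j 0 = (j:ℝ)/n := by
        simp only [hQ]
        rw [min_eq_left (by positivity), max_eq_left (by positivity)]
      rw [h1, div_self (hFne j (le_of_lt hj)), Complex.log_one]
    rw [Finset.sum_congr rfl this]
    simp
  · intro t ht
    have key : ∀ k : ℕ, k ≤ n →
        ∏ j ∈ Finset.range k, (F (Q j t) / F ((j:ℝ)/n)) = F (min t ((k:ℝ)/n)) / F 0 := by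
      intro k hk
      induction k with
      | zero =>
        simp [min_eq_right ht.1, div_self (hne 0 (by norm_num))]
      | succ k ih =>
        have hk' : k < n := hk
        have ihv := ih (le_of_lt hk')
        rw [Finset.prod_range_succ, ihv]
        have hkk1 : (k:ℝ)/n ≤ ((k:ℝ)+1)/n := by gcongr; linarith
        rcases le_total t ((k:ℝ)/n) with hle | hle
        · have h1 : min t ((k:ℝ)/n) = t := min_eq_left hle
          have h2 : min t (((k:ℝ)+1)/n) = t := min_eq_left (le_trans hle hkk1)
          have h3 : Q k t = (k:ℝ)/n := by
            simp only [hQ]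
            rw [h2, max_eq_left hle]
          rw [h1, h3, div_self (hFne k (le_of_lt hk')), mul_one]
          rw [show ((k:ℝ)+1) = ((k+1:ℕ):ℝ) by push_cast; ring] at h2
          rw [h2]
        · have h1 : min t ((k:ℝ)/n) = (k:ℝ)/n := min_eq_right hle
          have h3 : Q k t = min t (((k:ℝ)+1)/n) := by
            simp only [hQ]
            exact max_eq_right (le_min hle hkk1)
          rw [h1, h3]
          have hc := hFne k (le_of_lt hk')
          have h0 := hne 0 (by norm_num)
          rw [show ((k:ℝ)+1) = ((k+1:ℕ):ℝ) by push_cast; ring]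
          field_simp
    have hprodne : ∀ j ∈ Finset.range n, F (Q j t) / F ((j:ℝ)/n) ≠ 0 := by
      intro j hj
      rw [Finset.mem_range] at hj
      intro hzero
      have := hre j hj t
      rw [hzero] at this
      simp at this
    rw [hh]
    simp only
    rw [Complex.exp_add, Complex.exp_sum]
    have : ∀ j ∈ Finset.range n, Complex.exp (Complex.log (F (Q j t) / F ((j:ℝ)/n)))
        = F (Q j t) / F ((j:ℝ)/n) := fun j hj => Complex.exp_log (hprodne j hj)
    rw [Finset.prod_congr rfl this, key n le_rfl]
    rw [show ((n:ℝ)/n) = 1 by field_simp, min_eq_left ht.2, hz]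
    exact mul_div_cancel₀ _ (hne 0 (by norm_num))


/-- If `exp (u t)` has positive real part on `[0,1]` and `|Im (u 0)| < π/2`, then
`|Im (u t)| < π/2` throughout `[0,1]`. -/
lemma strip_lemma (u : ℝ → ℂ) (hu : ContinuousOn u (Set.Icc 0 1))
    (hpos : ∀ t ∈ Set.Icc (0:ℝ) 1, 0 < (Complex.exp (u t)).re)
    (h0 : |(u 0).im| < π / 2) :
    ∀ t ∈ Set.Icc (0:ℝ) 1, |(u t).im| < π / 2 := by
  have hcos : ∀ r ∈ Set.Icc (0:ℝ) 1, 0 < Real.cos (u r).im := by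
    intro r hr
    have h := hpos r hr
    rw [Complex.exp_re] at h
    nlinarith [Real.exp_pos (u r).re]
  intro t ht
  have hsub : Set.Icc (0:ℝ) t ⊆ Set.Icc 0 1 := Set.Icc_subset_Icc le_rfl ht.2
  have hcont : ContinuousOn (fun r => (u r).im) (Set.Icc 0 t) :=
    (Complex.continuous_im.comp_continuousOn (hu.mono hsub))
  rw [abs_lt] at h0 ⊢
  constructor
  · by_contra hle
    push_neg at hle
    have hmem : (-(π/2)) ∈ Set.Icc ((u t).im) ((u 0).im) := ⟨hle, le_of_lt h0.1⟩
    obtain ⟨r, hr, hrval⟩ := intermediate_value_Icc' ht.1 hcont hmem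
    have := hcos r (hsub hr)
    simp only at hrval
    rw [hrval] at this
    simp [Real.cos_pi_div_two] at this
  · by_contra hle
    push_neg at hle
    have hmem : (π/2) ∈ Set.Icc ((u 0).im) ((u t).im) := ⟨le_of_lt h0.2, hle⟩
    obtain ⟨r, hr, hrval⟩ := intermediate_value_Icc ht.1 hcont hmem
    have := hcos r (hsub hr)
    simp only at hrval
    rw [hrval] at this
    simp [Real.cos_pi_div_two] at this

/-- An integer multiple of `2π` smaller than `π` in absolute value is zero. -/
lemma int_mul_two_pi_eq_zero {n : ℤ} (h : |(n:ℝ) * (2 * π)| < π) : n = 0 := by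
  by_contra hn
  have h1 : (1:ℝ) ≤ |(n:ℝ)| := by
    rw [← Int.cast_abs]
    exact_mod_cast Int.one_le_abs hn
  have hπ := Real.pi_pos
  rw [abs_mul, abs_of_pos (by linarith : (0:ℝ) < 2*π)] at h
  nlinarith

/-- The imaginary part of `n * (2πi)`. -/
lemma im_int_mul (n : ℤ) : ((n:ℂ) * (2 * π * Complex.I)).im = (n:ℝ) * (2*π) := by
  simp


noncomputable def phi : ℝ × ℝ → ℂ := fun p =>
  (1 / 3) * (Complex.exp (Complex.I * p.1) + Complex.exp (Complex.I * p.2) +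
    Complex.exp (Complex.I * (p.1 + p.2)))

/-- clamp to `[0,1]` -/
noncomputable def cl (t : ℝ) : ℝ := min (max t 0) 1

lemma cl_mem (t : ℝ) : cl t ∈ Set.Icc (0:ℝ) 1 :=
  ⟨le_min (le_max_right _ _) zero_le_one, min_le_right _ _⟩

@[fun_prop] lemma cl_continuous : Continuous cl := (continuous_id.max continuous_const).min continuous_const

/-- the triangular loop `(0,-π) → (π,0) → (π,-π) → (0,-π)` -/
noncomputable def gam (t : ℝ) : ℝ × ℝ :=
  (2*π*(min (cl t) (1/2)) - 4*π*(max (cl t - 3/4) 0),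
   2*π*(min (cl t) (1/2)) - π - 4*π*(min (max (cl t - 1/2) 0) (1/4)))

@[fun_prop] lemma gam_continuous : Continuous gam := by
  unfold gam
  fun_prop

/-- explicit value of `φ` along the loop -/
noncomputable def Phi (t : ℝ) : ℂ :=
  -(1/3) * Complex.exp (4*π*Complex.I*(min (cl t) (1/2)))

@[fun_prop] lemma Phi_continuous : Continuous Phi := by
  unfold Phi
  have : Continuous fun t : ℝ => ((4*π*Complex.I) * ((min (cl t) (1/2) : ℝ) : ℂ)) := by
    apply continuous_const.mul
    exact Complex.continuous_ofReal.comp ((cl_continuous.min continuous_const))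
  exact continuous_const.mul (Complex.continuous_exp.comp this)

lemma Phi_abs (t : ℝ) : ‖Phi t‖ = 1/3 := by
  unfold Phi
  rw [norm_mul, norm_neg]
  have : (4*π*Complex.I*(min (cl t) (1/2) : ℝ)) = ((4*π*(min (cl t) (1/2)) : ℝ) : ℂ) * Complex.I := by
    push_cast; ring
  rw [this, Complex.norm_exp_ofReal_mul_I]
  norm_num

lemma phi_gam (t : ℝ) : phi (gam t) = Phi t := by
  have hu := cl_mem t
  set u := cl t with hu'
  unfold phi gam Phi
  rcases le_total u (1/2) with h1 | h1
  · -- diagonal part : x = 2πu, y = 2πu - π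
    rw [min_eq_left h1]
    have e1 : max (u - 3/4) 0 = 0 := max_eq_right (by linarith)
    have e2 : min (max (u - 1/2) 0) (1/4) = 0 := by
      rw [max_eq_right (by linarith)]
      exact min_eq_left (by norm_num)
    rw [e1, e2]
    simp only
    have hx : ((2*π*u - 4*π*0 : ℝ) : ℂ) = 2*π*u := by push_cast; ring
    have hy : ((2*π*u - π - 4*π*0 : ℝ) : ℂ) = 2*π*u - π := by push_cast; ring
    rw [hx, hy]
    have hexpy : Complex.exp (Complex.I * (2*π*u - π)) = - Complex.exp (Complex.I * (2*π*u)) := by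
      rw [show Complex.I * (2*π*u - π) = Complex.I * (2*π*u) - π * Complex.I by ring]
      rw [Complex.exp_sub, Complex.exp_pi_mul_I]
      field_simp
    have hexpsum : Complex.exp (Complex.I * (2*π*u + (2*π*u - π)))
        = - Complex.exp (4*π*Complex.I*u) := by
      rw [show Complex.I * ((2*π*u) + (2*π*u - π)) = 4*π*Complex.I*u - π * Complex.I by ring]
      rw [Complex.exp_sub, Complex.exp_pi_mul_I]
      field_simp
    rw [hexpy, hexpsum]
    ring
  · rw [min_eq_right h1]
    rcases le_total u (3/4) with h2 | h2
    · -- vertical part : x = π, y = -4π(u - 1/2)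
      have e1 : max (u - 3/4) 0 = 0 := max_eq_right (by linarith)
      have e2 : min (max (u - 1/2) 0) (1/4) = u - 1/2 := by
        rw [max_eq_left (by linarith)]
        exact min_eq_left (by linarith)
      rw [e1, e2]
      simp only
      have hx : ((2*π*(1/2) - 4*π*0 : ℝ) : ℂ) = (π : ℂ) := by push_cast; ring
      have hy : ((2*π*(1/2) - π - 4*π*(u - 1/2) : ℝ) : ℂ) = -(4*π*(u - 1/2)) := by
        push_cast; ring
      rw [hx, hy]
      have h3 : Complex.exp (Complex.I * (π:ℂ)) = -1 := by
        rw [mul_comm, Complex.exp_pi_mul_I]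
      have h4 : Complex.exp (Complex.I * ((π:ℂ) + -(4*π*(u - 1/2))))
          = - Complex.exp (Complex.I * (-(4*π*(u-1/2)))) := by
        rw [mul_add, Complex.exp_add, h3]
        ring
      rw [h3, h4]
      have h5 : Complex.exp (4*π*Complex.I*(1/2:ℝ)) = 1 := by
        rw [show (4*π*Complex.I*((1:ℝ)/2:ℝ) : ℂ) = 2*π*Complex.I by push_cast; ring]
        exact Complex.exp_two_pi_mul_I
      rw [h5]
      ring
    · -- horizontal part : x = π - 4π(u - 3/4), y = -π
      have e1 : max (u - 3/4) 0 = u - 3/4 := max_eq_left (by linarith)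
      have e2 : min (max (u - 1/2) 0) (1/4) = 1/4 := by
        rw [max_eq_left (by linarith)]
        exact min_eq_right (by linarith)
      rw [e1, e2]
      simp only
      have hy : ((2*π*(1/2) - π - 4*π*(1/4) : ℝ) : ℂ) = -(π:ℂ) := by push_cast; ring
      rw [hy]
      set x : ℝ := 2*π*(1/2) - 4*π*(u - 3/4) with hx
      have h3 : Complex.exp (Complex.I * (-(π:ℂ))) = -1 := by
        rw [show Complex.I * (-(π:ℂ)) = -(π * Complex.I) by ring, Complex.exp_neg,
          Complex.exp_pi_mul_I]
        norm_num
      have h4 : Complex.exp (Complex.I * ((x:ℂ) + -(π:ℂ)))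
          = - Complex.exp (Complex.I * (x:ℂ)) := by
        rw [mul_add, Complex.exp_add, h3]
        ring
      rw [h3, h4]
      have h5 : Complex.exp (4*π*Complex.I*(1/2:ℝ)) = 1 := by
        rw [show (4*π*Complex.I*((1:ℝ)/2:ℝ) : ℂ) = 2*π*Complex.I by push_cast; ring]
        exact Complex.exp_two_pi_mul_I
      rw [h5]
      ring

lemma gam_mem (t : ℝ) : (gam t).1 ∈ Set.Icc (0:ℝ) π ∧ (gam t).2 ∈ Set.Icc (-π) 0 := by
  have hu := cl_mem t
  have hπ := Real.pi_pos
  unfold gam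
  set u := cl t with hu'
  simp only
  obtain ⟨hu0, hu1⟩ := hu
  rcases le_total u (1/2) with h1 | h1
  · rw [min_eq_left h1, max_eq_right (by linarith : u - 3/4 ≤ 0),
      max_eq_right (by linarith : u - 1/2 ≤ 0), min_eq_left (by norm_num : (0:ℝ) ≤ 1/4)]
    constructor
    · constructor <;> nlinarith
    · constructor <;> nlinarith
  · rw [min_eq_right h1, max_eq_left (by linarith : 0 ≤ u - 1/2)]
    rcases le_total u (3/4) with h2 | h2
    · rw [max_eq_right (by linarith : u - 3/4 ≤ 0), min_eq_left (by linarith : u - 1/2 ≤ 1/4)]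
      constructor
      · constructor <;> nlinarith
      · constructor <;> nlinarith
    · rw [max_eq_left (by linarith : 0 ≤ u - 3/4), min_eq_right (by linarith : 1/4 ≤ u - 1/2)]
      constructor
      · constructor <;> nlinarith
      · constructor <;> nlinarith

lemma gam_zero_one : gam 0 = gam 1 ∧ Phi 0 = Phi 1 := by
  have hcl0 : cl 0 = 0 := by unfold cl; norm_num
  have hcl1 : cl 1 = 1 := by unfold cl; norm_num
  constructor
  · unfold gam
    rw [hcl0, hcl1]
    norm_num
    constructor <;> ring
  · unfold Phi
    rw [hcl0, hcl1, min_eq_left (by norm_num : (0:ℝ) ≤ 1/2),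
      min_eq_right (by norm_num : (1:ℝ)/2 ≤ 1)]
    rw [show (4*π*Complex.I*((0:ℝ):ℂ) : ℂ) = 0 by push_cast; ring]
    rw [show (4*π*Complex.I*(((1/2:ℝ)):ℂ) : ℂ) = 2*π*Complex.I by push_cast; ring]
    rw [Complex.exp_two_pi_mul_I, Complex.exp_zero]

noncomputable def sig1 (s : ℝ) : ℝ := min (max (2*s) 0) 1
noncomputable def sig2 (s : ℝ) : ℝ := min (max (2*s - 1) 0) 1
noncomputable def Pm (s t : ℝ) : ℝ × ℝ :=
  ((1 - sig2 s) * (gam t).1 + sig2 s * π, (1 - sig2 s) * (gam t).2 + sig2 s * (-π))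
noncomputable def Hm (g : ℝ × ℝ → ℂ) (s t : ℝ) : ℂ :=
  ((1 - sig1 s : ℝ) : ℂ) * Phi t + ((sig1 s : ℝ) : ℂ) * g (Pm s t)

lemma sig1_mem (s : ℝ) : sig1 s ∈ Set.Icc (0:ℝ) 1 :=
  ⟨le_min (le_max_right _ _) zero_le_one, min_le_right _ _⟩
lemma sig2_mem (s : ℝ) : sig2 s ∈ Set.Icc (0:ℝ) 1 :=
  ⟨le_min (le_max_right _ _) zero_le_one, min_le_right _ _⟩
lemma sig1_zero : sig1 0 = 0 := by unfold sig1; norm_num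
lemma sig1_one_of (s : ℝ) (hs : 1/2 ≤ s) : sig1 s = 1 := by
  unfold sig1
  rw [max_eq_left (by linarith), min_eq_right (by linarith)]
lemma sig2_zero_of (s : ℝ) (hs : s ≤ 1/2) : sig2 s = 0 := by
  unfold sig2
  rw [max_eq_right (by linarith), min_eq_left zero_le_one]
lemma sig2_one : sig2 1 = 1 := by unfold sig2; norm_num

@[fun_prop] lemma sig1_continuous : Continuous sig1 := by
  unfold sig1; fun_prop
@[fun_prop] lemma sig2_continuous : Continuous sig2 := by
  unfold sig2; fun_prop
@[fun_prop] lemma Pm_continuous : Continuous fun p : ℝ × ℝ => Pm p.1 p.2 := by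
  unfold Pm; fun_prop
lemma Hm_continuous (g : ℝ × ℝ → ℂ) (hg : Continuous g) :
    Continuous fun p : ℝ × ℝ => Hm g p.1 p.2 := by
  unfold Hm; fun_prop

lemma Pm_mem (s t : ℝ) : (Pm s t).1 ∈ Set.Icc (-π) π ∧ (Pm s t).2 ∈ Set.Icc (-π) π := by
  have hπ := Real.pi_pos
  obtain ⟨⟨hx0, hx1⟩, ⟨hy0, hy1⟩⟩ := gam_mem t
  obtain ⟨hs0, hs1⟩ := sig2_mem s
  unfold Pm
  constructor
  · constructor <;> simp only <;> nlinarith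
  · constructor <;> simp only <;> nlinarith

lemma Hm_eq_of_le (g : ℝ × ℝ → ℂ) (s t : ℝ) (hs : s ≤ 1/2) :
    Hm g s t = Phi t + ((sig1 s : ℝ) : ℂ) * (g (gam t) - Phi t) := by
  have h2 : Pm s t = gam t := by
    unfold Pm
    rw [sig2_zero_of s hs]
    simp
  unfold Hm
  rw [h2]
  push_cast
  ring

lemma Hm_eq_of_ge (g : ℝ × ℝ → ℂ) (s t : ℝ) (hs : 1/2 ≤ s) :
    Hm g s t = g (Pm s t) := by
  unfold Hm
  rw [sig1_one_of s hs]
  push_cast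
  ring

lemma Hm_norm_ge (g : ℝ × ℝ → ℂ) (s t : ℝ) (hs : s ≤ 1/2)
    (happ : ‖g (gam t) - Phi t‖ < 1/20) : 17/60 ≤ ‖Hm g s t‖ := by
  rw [Hm_eq_of_le g s t hs]
  have h1 : ‖Phi t‖ = 1/3 := by rw [Phi_abs]
  have h2 : ‖((sig1 s : ℝ) : ℂ) * (g (gam t) - Phi t)‖ ≤ 1/20 := by
    rw [norm_mul, Complex.norm_real, Real.norm_eq_abs,
      abs_of_nonneg (sig1_mem s).1]
    calc sig1 s * ‖g (gam t) - Phi t‖ ≤ 1 * ‖g (gam t) - Phi t‖ := by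
          apply mul_le_mul_of_nonneg_right (sig1_mem s).2 (norm_nonneg _)
      _ ≤ 1/20 := by rw [one_mul]; linarith
  have h3 : ‖Phi t‖ ≤ ‖Phi t + ((sig1 s : ℝ) : ℂ) * (g (gam t) - Phi t)‖
      + ‖((sig1 s : ℝ) : ℂ) * (g (gam t) - Phi t)‖ := by
    calc ‖Phi t‖ = ‖(Phi t + ((sig1 s : ℝ) : ℂ) * (g (gam t) - Phi t))
        - ((sig1 s : ℝ) : ℂ) * (g (gam t) - Phi t)‖ := by ring_nf
      _ ≤ _ := norm_sub_le _ _
  linarith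

lemma Hm_ne (g : ℝ × ℝ → ℂ)
    (hgP : ∀ s t : ℝ, g (Pm s t) ≠ 0)
    (happ : ∀ t : ℝ, ‖g (gam t) - Phi t‖ < 1/20) (s t : ℝ) : Hm g s t ≠ 0 := by
  rcases le_total s (1/2) with hs | hs
  · intro h0
    have := Hm_norm_ge g s t hs (happ t)
    rw [h0] at this
    norm_num at this
  · rw [Hm_eq_of_ge g s t hs]
    exact hgP s t

lemma Hm_base (g : ℝ × ℝ → ℂ) (s : ℝ) : Hm g s 0 = Hm g s 1 := by
  have h1 : gam 0 = gam 1 ∧ Phi 0 = Phi 1 := gam_zero_one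
  unfold Hm Pm
  rw [h1.1, h1.2]

lemma Hm_zero (g : ℝ × ℝ → ℂ) (t : ℝ) : Hm g 0 t = Phi t := by
  unfold Hm
  rw [sig1_zero]
  push_cast
  ring

lemma Hm_one (g : ℝ × ℝ → ℂ) (t : ℝ) : Hm g 1 t = g (π, -π) := by
  have h2 : Pm 1 t = (π, -π) := by
    unfold Pm
    rw [sig2_one]
    norm_num
  rw [Hm_eq_of_ge g 1 t (by norm_num), h2]

noncomputable def ell0 (t : ℝ) : ℂ :=
  ((-Real.log 3 : ℝ) : ℂ) + π*Complex.I + 4*π*Complex.I*((min (cl t) (1/2) : ℝ) : ℂ)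

lemma ell0_continuous : Continuous ell0 := by
  unfold ell0
  fun_prop

lemma ell0_exp (t : ℝ) : Complex.exp (ell0 t) = Phi t := by
  unfold ell0 Phi
  rw [Complex.exp_add, Complex.exp_add]
  rw [show (((-Real.log 3 : ℝ)) : ℂ) = ((-Real.log 3 : ℝ) : ℂ) from rfl]
  rw [← Complex.ofReal_exp, Real.exp_neg, Real.exp_log (by norm_num : (0:ℝ) < 3)]
  rw [show Complex.exp ((π:ℂ) * Complex.I) = -1 from Complex.exp_pi_mul_I]
  push_cast
  ring

lemma ell0_diff : ell0 1 - ell0 0 = 2*π*Complex.I := by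
  unfold ell0
  have hcl0 : cl 0 = 0 := by unfold cl; norm_num
  have hcl1 : cl 1 = 1 := by unfold cl; norm_num
  rw [hcl0, hcl1, min_eq_left (by norm_num : (0:ℝ) ≤ 1/2),
    min_eq_right (by norm_num : (1:ℝ)/2 ≤ 1)]
  push_cast
  ring

theorem exists_zero_of_close_to_phi (g : ℝ × ℝ → ℂ) (hg : Continuous g)
    (happrox : ∀ x y : ℝ, x ∈ Set.Icc (-π) π → y ∈ Set.Icc (-π) π →
      ‖g (x, y) - phi (x, y)‖ < 1 / 20) :
    ∃ x₀ y₀ : ℝ, x₀ ∈ Set.Icc (-π) π ∧ y₀ ∈ Set.Icc (-π) π ∧ g (x₀, y₀) = 0 := by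
  by_contra hcon
  push_neg at hcon
  have hπ := Real.pi_pos
  have hgne : ∀ p : ℝ × ℝ, p.1 ∈ Set.Icc (-π) π → p.2 ∈ Set.Icc (-π) π → g p ≠ 0 := by
    intro p h1 h2
    have := hcon p.1 p.2 h1 h2
    rwa [Prod.mk.eta] at this
  have hgP : ∀ s t : ℝ, g (Pm s t) ≠ 0 := fun s t =>
    hgne _ (Pm_mem s t).1 (Pm_mem s t).2
  have happ : ∀ t : ℝ, ‖g (gam t) - Phi t‖ < 1/20 := by
    intro t
    obtain ⟨⟨hx0, hx1⟩, ⟨hy0, hy1⟩⟩ := gam_mem t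
    have := happrox (gam t).1 (gam t).2 ⟨by linarith, hx1⟩ ⟨hy0, by linarith⟩
    rw [Prod.mk.eta, phi_gam] at this
    exact this
  set H : ℝ → ℝ → ℂ := Hm g with hHdef
  have hHne : ∀ s t : ℝ, H s t ≠ 0 := Hm_ne g hgP happ
  have hHc : Continuous fun p : ℝ × ℝ => H p.1 p.2 := Hm_continuous g hg
  -- minimum of ‖H‖ on the unit square
  have hKne : (Set.Icc (0:ℝ) 1 ×ˢ Set.Icc (0:ℝ) 1).Nonempty := by
    refine ⟨(0,0), ?_⟩
    constructor <;> norm_num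
  obtain ⟨q, hqK, hqmin⟩ := (isCompact_Icc.prod isCompact_Icc).exists_isMinOn hKne
    (hHc.norm.continuousOn)
  set m := ‖H q.1 q.2‖ with hm
  have hm0 : 0 < m := norm_pos_iff.2 (hHne q.1 q.2)
  -- uniform continuity of H on the square
  have hUC : UniformContinuousOn (fun p : ℝ × ℝ => H p.1 p.2)
      (Set.Icc (0:ℝ) 1 ×ˢ Set.Icc (0:ℝ) 1) :=
    (isCompact_Icc.prod isCompact_Icc).uniformContinuousOn_of_continuous
      (hHc.continuousOn)
  obtain ⟨δ, hδ0, hδ⟩ := Metric.uniformContinuousOn_iff.1 hUC m hm0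
  -- lift of the base point curve
  obtain ⟨ℓ, hℓc, hℓ0, hℓexp⟩ := lift_exists (fun s => H s 0)
    (hHc.comp (continuous_id.prodMk continuous_const))
    (fun s _ => hHne s 0) (Complex.log (H 0 0)) (Complex.exp_log (hHne 0 0))
  have hUC2 := isCompact_Icc.uniformContinuousOn_of_continuous
    (hℓc.continuousOn : ContinuousOn ℓ (Set.Icc (0:ℝ) 1))
  obtain ⟨δ₂, hδ₂0, hδ₂⟩ := Metric.uniformContinuousOn_iff.1 hUC2 (π/2) (by linarith)
  -- choose N
  obtain ⟨N', hN'⟩ := exists_nat_one_div_lt (lt_min hδ0 hδ₂0)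
  set N : ℕ := N' + 1 with hN
  have hNpos : (0:ℝ) < N := by positivity
  have h1N : 1/(N:ℝ) < min δ δ₂ := by rw [hN]; push_cast; exact hN'
  -- lifts for each slice
  have lifts : ∀ s : ℝ, s ∈ Set.Icc (0:ℝ) 1 → ∃ h : ℝ → ℂ, Continuous h ∧ h 0 = ℓ s ∧
      ∀ t ∈ Set.Icc (0:ℝ) 1, Complex.exp (h t) = H s t := by
    intro s hs
    exact lift_exists (fun t => H s t)
      (hHc.comp (continuous_const.prodMk continuous_id))
      (fun t _ => hHne s t) (ℓ s) (hℓexp s hs)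
  choose h hc h0 hexp using lifts
  have hmemN : ∀ k : ℕ, k ≤ N → ((k:ℝ)/N) ∈ Set.Icc (0:ℝ) 1 := by
    intro k hk
    constructor
    · positivity
    · rw [div_le_one hNpos]; exact_mod_cast hk
  have h01 : (0:ℝ) ∈ Set.Icc (0:ℝ) 1 := by norm_num
  have h11 : (1:ℝ) ∈ Set.Icc (0:ℝ) 1 := by norm_num
  have hPhine : ∀ t : ℝ, Phi t ≠ 0 := by
    intro t hz
    have := Phi_abs t
    rw [hz] at this
    norm_num at this
  -- at s = 0 the winding is 2πi
  have key0 : ∀ (s : ℝ) (hs : s ∈ Set.Icc (0:ℝ) 1), s = 0 →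
      h s hs 1 - ℓ s = 2*π*Complex.I := by
    intro s hs hs0
    subst hs0
    set u : ℝ → ℂ := fun t => (h 0 hs t - ell0 t) - (h 0 hs 0 - ell0 0) with hu
    have hexp1 : ∀ t ∈ Set.Icc (0:ℝ) 1, Complex.exp (u t) = 1 := by
      intro t ht
      have e1 : Complex.exp (h 0 hs t - ell0 t) = 1 := by
        rw [Complex.exp_sub, hexp 0 hs t ht, ell0_exp]
        rw [hHdef, Hm_zero]
        exact div_self (hPhine t)
      have e2 : Complex.exp (h 0 hs 0 - ell0 0) = 1 := by
        rw [Complex.exp_sub, hexp 0 hs 0 h01, ell0_exp]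
        rw [hHdef, Hm_zero]
        exact div_self (hPhine 0)
      rw [hu]
      simp only
      rw [Complex.exp_sub, e1, e2]
      norm_num
    have hustrip := strip_lemma u
      (((hc 0 hs).sub ell0_continuous).sub continuous_const).continuousOn
      (by
        intro t ht
        rw [hexp1 t ht]
        norm_num)
      (by
        rw [hu]
        simp only [sub_self]
        rw [show |(0:ℂ).im| = 0 by simp]
        linarith)
    have hu1 := hustrip 1 h11
    obtain ⟨nn, hnn⟩ := Complex.exp_eq_one_iff.1 (hexp1 1 h11)
    have him : (u 1).im = (nn:ℝ) * (2*π) := by rw [hnn]; simp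
    rw [him] at hu1
    have hnn0 : nn = 0 := by
      apply int_mul_two_pi_eq_zero
      rw [abs_lt] at hu1 ⊢
      constructor <;> [linarith [hu1.1]; linarith [hu1.2]]
    rw [hnn0] at hnn
    simp only [Int.cast_zero, zero_mul] at hnn
    have hdiff : h 0 hs 1 - h 0 hs 0 = ell0 1 - ell0 0 := by
      rw [hu] at hnn
      simp only at hnn
      linear_combination hnn
    rw [h0 0 hs] at hdiff
    rw [ell0_diff] at hdiff
    linear_combination hdiff
  -- at s = 1 the winding is 0
  have key1 : ∀ (s : ℝ) (hs : s ∈ Set.Icc (0:ℝ) 1), s = 1 →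
      h s hs 1 - ℓ s = 0 := by
    intro s hs hs1
    subst hs1
    set u : ℝ → ℂ := fun t => h 1 hs t - h 1 hs 0 with hu
    have hconst : ∀ t : ℝ, H 1 t = H 1 0 := by
      intro t
      rw [hHdef, Hm_one, Hm_one]
    have hexp1 : ∀ t ∈ Set.Icc (0:ℝ) 1, Complex.exp (u t) = 1 := by
      intro t ht
      rw [hu]
      simp only
      rw [Complex.exp_sub, hexp 1 hs t ht, hexp 1 hs 0 h01, hconst t]
      exact div_self (hHne 1 0)
    have hustrip := strip_lemma u
      ((hc 1 hs).sub continuous_const).continuousOn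
      (by
        intro t ht
        rw [hexp1 t ht]
        norm_num)
      (by
        rw [hu]
        simp only [sub_self]
        rw [show |(0:ℂ).im| = 0 by simp]
        linarith)
    have hu1 := hustrip 1 h11
    obtain ⟨nn, hnn⟩ := Complex.exp_eq_one_iff.1 (hexp1 1 h11)
    have him : (u 1).im = (nn:ℝ) * (2*π) := by rw [hnn]; simp
    rw [him] at hu1
    have hnn0 : nn = 0 := by
      apply int_mul_two_pi_eq_zero
      rw [abs_lt] at hu1 ⊢
      constructor <;> [linarith [hu1.1]; linarith [hu1.2]]
    rw [hnn0] at hnn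
    simp only [Int.cast_zero, zero_mul] at hnn
    rw [hu] at hnn
    simp only at hnn
    rw [h0 1 hs] at hnn
    linear_combination hnn
  -- step between adjacent slices
  have keystep : ∀ (s s' : ℝ) (hs : s ∈ Set.Icc (0:ℝ) 1) (hs' : s' ∈ Set.Icc (0:ℝ) 1),
      s' - s = 1/N → h s hs 1 - ℓ s = 2*π*Complex.I →
      h s' hs' 1 - ℓ s' = 2*π*Complex.I := by
    intro s s' hs hs' hss' ihv
    have hds : dist s' s = 1/N := by
      rw [Real.dist_eq, hss', abs_of_pos (by positivity)]
    set u : ℝ → ℂ := fun t => h s' hs' t - h s hs t with hu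
    have hexpu : ∀ t ∈ Set.Icc (0:ℝ) 1, Complex.exp (u t) = H s' t / H s t := by
      intro t ht
      rw [hu]
      simp only
      rw [Complex.exp_sub, hexp s' hs' t ht, hexp s hs t ht]
    have hpos : ∀ t ∈ Set.Icc (0:ℝ) 1, 0 < (Complex.exp (u t)).re := by
      intro t ht
      rw [hexpu t ht]
      have hmem1 : (s', t) ∈ Set.Icc (0:ℝ) 1 ×ˢ Set.Icc (0:ℝ) 1 := ⟨hs', ht⟩
      have hmem2 : (s, t) ∈ Set.Icc (0:ℝ) 1 ×ˢ Set.Icc (0:ℝ) 1 := ⟨hs, ht⟩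
      have hdist : dist (s', t) (s, t) < δ := by
        rw [Prod.dist_eq]
        simp only [dist_self]
        rw [max_eq_left dist_nonneg, hds]
        exact lt_of_lt_of_le h1N (min_le_left _ _)
      have hclose := hδ (s', t) hmem1 (s, t) hmem2 hdist
      rw [dist_eq_norm] at hclose
      have hge : m ≤ ‖H s t‖ := isMinOn_iff.1 hqmin (s,t) hmem2
      have hne := hHne s t
      have hratio : ‖H s' t / H s t - 1‖ < 1 := by
        rw [div_sub_one hne, norm_div, div_lt_one (lt_of_lt_of_le hm0 hge)]
        exact lt_of_lt_of_le hclose hge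
      have h2 : |(H s' t / H s t - 1).re| ≤ ‖H s' t / H s t - 1‖ :=
        Complex.abs_re_le_norm _
      have h3 : (H s' t / H s t - 1).re = (H s' t / H s t).re - 1 := by simp
      rw [h3] at h2
      rcases abs_le.1 h2 with ⟨h4, _⟩
      linarith
    have hu0 : u 0 = ℓ s' - ℓ s := by
      rw [hu]
      simp only
      rw [h0 s' hs', h0 s hs]
    have hu0im : |(u 0).im| < π/2 := by
      have hd2 : dist s' s < δ₂ := by
        rw [hds]
        exact lt_of_lt_of_le h1N (min_le_right _ _)
      have hd3 := hδ₂ s' hs' s hs hd2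
      rw [dist_eq_norm] at hd3
      rw [hu0]
      calc |(ℓ s' - ℓ s).im| ≤ ‖ℓ s' - ℓ s‖ := Complex.abs_im_le_norm _
        _ < π/2 := hd3
    have hustrip := strip_lemma u
      (((hc s' hs').sub (hc s hs)).continuousOn) hpos hu0im
    have hu1 := hustrip 1 h11
    have hd'exp : Complex.exp (h s' hs' 1 - ℓ s') = 1 := by
      rw [Complex.exp_sub, hexp s' hs' 1 h11]
      rw [show H s' 1 = H s' 0 from (Hm_base g s').symm]
      rw [show Complex.exp (ℓ s') = H s' 0 from hℓexp s' hs']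
      exact div_self (hHne s' 0)
    obtain ⟨nn, hnn⟩ := Complex.exp_eq_one_iff.1 hd'exp
    have hkey : u 1 = (h s' hs' 1 - ℓ s') - 2*π*Complex.I + u 0 := by
      simp only [hu]
      rw [h0 s' hs', h0 s hs]
      linear_combination -ihv
    have him : ((nn:ℂ) * (2*↑π*Complex.I) - 2*↑π*Complex.I).im = ((nn:ℝ) - 1) * (2*π) := by
      simp
      ring
    have hu1im : (u 1).im = ((nn:ℝ) - 1) * (2*π) + (u 0).im := by
      rw [hkey, hnn]
      rw [show ((nn:ℂ) * (2 * ↑π * Complex.I) - 2*↑π*Complex.I + u 0).im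
        = ((nn:ℂ) * (2 * ↑π * Complex.I) - 2*↑π*Complex.I).im + (u 0).im by simp]
      rw [him]
    have hnn1 : nn - 1 = 0 := by
      apply int_mul_two_pi_eq_zero
      have habs : |((nn:ℝ) - 1) * (2*π)| < π := by
        rw [hu1im] at hu1
        rw [abs_lt] at hu1 hu0im ⊢
        constructor <;> [linarith [hu1.1, hu0im.2]; linarith [hu1.2, hu0im.1]]
      rw [show (((nn - 1 : ℤ)):ℝ) = (nn:ℝ) - 1 by push_cast; ring]
      exact habs
    have hnn' : nn = 1 := by omega
    rw [hnn'] at hnn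
    rw [hnn]
    push_cast
    ring
  -- the key induction
  have main : ∀ k : ℕ, k ≤ N → ∀ hk : ((k:ℝ)/N) ∈ Set.Icc (0:ℝ) 1,
      h ((k:ℝ)/N) hk 1 - ℓ ((k:ℝ)/N) = 2*π*Complex.I := by
    intro k
    induction k with
    | zero =>
      intro _ hk
      exact key0 _ hk (by norm_num)
    | succ k ih =>
      intro hk1 hk'
      have hkN : k ≤ N := le_of_lt (Nat.lt_of_succ_le hk1)
      have hkmem := hmemN k hkN
      exact keystep ((k:ℝ)/N) (((k+1:ℕ):ℝ)/N) hkmem hk'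
        (by push_cast; field_simp; ring) (ih hkN hkmem)
  -- contradiction
  have hNN : (((N:ℕ):ℝ)/N) = 1 := by field_simp
  have hmemNN := hmemN N le_rfl
  have hmain := main N le_rfl hmemNN
  have hzero := key1 ((N:ℝ)/N) hmemNN hNN
  rw [hmain] at hzero
  have him : (2*(π:ℂ)*Complex.I).im = 2*π := by simp
  rw [hzero] at him
  simp at him
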